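/- Fix 0 < p < 1 and let F_p(α) = p²α^{−2} + 2p(2−p) + (2−p)²α² − 4(α^{−p} + α^{2−p} − 1). Then F_p(α₂) < 0 for α₂ = √(p/(2−p)); equivalently, 2 > (1 + 2p − p²) · p^{p/2} (2−p)^{(2−p)/2} for all 0 < p < 1. Moreover, if α₁ is the unique solution in (0,1) of 1 + α² = 2α^p, then F_p(α₁) > 0. -/

import Mathlib

/-- The function `F_p(α) = p²α^{-2} + 2p(2-p) + (2-p)²α² - 4(α^{-p} + α^{2-p} - 1)`. -/
noncomputable def Fp (p a : ℝ) : ℝ :=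
  p ^ 2 * a ^ (-2 : ℝ) + 2 * p * (2 - p) + (2 - p) ^ 2 * a ^ 2
    - 4 * (a ^ (-p) + a ^ (2 - p) - 1)

section Aux
open Real

lemma neg_log_lb {x : ℝ} (h0 : 0 ≤ x) (h1 : x < 1) :
    x + x^2/2 + x^3/3 ≤ -Real.log (1 - x) := by
  have hs := Real.hasSum_pow_div_log_of_abs_lt_one (by rw [abs_of_nonneg h0]; exact h1)
  have hle := sum_le_hasSum (Finset.range 3) (fun i _ => by positivity) hs
  simp [Finset.sum_range_succ] at hle
  linarith

lemma neg_log_ub {x : ℝ} (h0 : 0 ≤ x) (h1 : x < 1) :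
    -Real.log (1 - x) ≤ x + x^2/2 + x^3/(3*(1-x)) := by
  have hs := Real.hasSum_pow_div_log_of_abs_lt_one (by rw [abs_of_nonneg h0]; exact h1)
  have hx1 : (0:ℝ) < 1 - x := by linarith
  have htailsum : HasSum (fun n : ℕ => x^(n+2+1)/((n:ℝ)+2+1))
      (-Real.log (1-x) - (x + x^2/2)) := by
    have h2 := (hasSum_nat_add_iff' (f := fun n : ℕ => x ^ (n + 1) / ((n:ℝ) + 1))
      (g := -Real.log (1-x)) 2).2 hs
    simp only [Finset.sum_range_succ, Finset.sum_range_zero] at h2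
    convert h2 using 2 with n
    · rfl
    · push_cast; ring
    · norm_num
  have hgeo : HasSum (fun i : ℕ => x^3/3 * x^i) (x^3/3 * (1-x)⁻¹) :=
    (hasSum_geometric_of_lt_one h0 h1).mul_left _
  have htail : -Real.log (1-x) - (x + x^2/2) ≤ x^3/3 * (1-x)⁻¹ := by
    refine hasSum_le (fun i => ?_) htailsum hgeo
    have h3 : (3:ℝ) ≤ (i:ℝ) + 2 + 1 := by
      have : (0:ℝ) ≤ (i:ℝ) := Nat.cast_nonneg i
      linarith
    have hp : x^(i+2+1) = x^3 * x^i := by ring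
    rw [hp, div_le_iff₀ (by linarith), div_mul_eq_mul_div, div_mul_eq_mul_div,
      le_div_iff₀ (by norm_num)]
    have hxn : (0:ℝ) ≤ x^3 * x^i := by positivity
    nlinarith [mul_le_mul_of_nonneg_left h3 hxn]
  have : x^3/3 * (1-x)⁻¹ = x^3/(3*(1-x)) := by
    field_simp
  linarith [htail, this ▸ htail]

lemma hasSum_f {e : ℝ} (h0 : 0 ≤ e) (h1 : e < 1) :
    HasSum (fun k : ℕ => (e^2)^(k+1) / (((k:ℝ)+1) * (2*(k:ℝ)+1)))
      ((1-e)*Real.log (1-e) + (1+e)*Real.log (1+e)) := by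
  have habs : |e| < 1 := by rw [abs_of_nonneg h0]; exact h1
  have habs2 : |e^2| < 1 := by
    rw [abs_of_nonneg (by positivity)]
    nlinarith
  have hA := (Real.hasSum_log_sub_log_of_abs_lt_one habs).mul_left e
  have hB := Real.hasSum_pow_div_log_of_abs_lt_one habs2
  have hC := hA.sub hB
  have hlog : Real.log (1 - e^2) = Real.log (1-e) + Real.log (1+e) := by
    have : 1 - e^2 = (1-e)*(1+e) := by ring
    rw [this, Real.log_mul (by linarith) (by linarith)]
  have hval : e * (Real.log (1+e) - Real.log (1-e)) - (-Real.log (1 - e^2))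
      = (1-e)*Real.log (1-e) + (1+e)*Real.log (1+e) := by
    rw [hlog]; ring
  rw [hval] at hC
  convert hC using 2 with k
  · rfl
  have hk1 : ((k:ℝ)+1) ≠ 0 := by positivity
  have hk2 : (2*(k:ℝ)+1) ≠ 0 := by positivity
  have hpow : e^(2*k+1) * e = (e^2)^(k+1) := by
    rw [← pow_succ]
    rw [← pow_mul]
    ring_nf
  field_simp
  ring_nf


lemma f_lower {e : ℝ} (h0 : 0 ≤ e) (h1 : e < 1) :
    e^2 + (e^2)^2/6 + (e^2)^3/15 ≤ (1-e)*Real.log (1-e) + (1+e)*Real.log (1+e) := by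
  have hs := hasSum_f h0 h1
  have hle := sum_le_hasSum (Finset.range 3) (fun i _ => by positivity) hs
  simp [Finset.sum_range_succ] at hle
  norm_num at hle
  linarith

lemma f_upper {e : ℝ} (h0 : 0 ≤ e) (h1 : e < 1) :
    (1-e)*Real.log (1-e) + (1+e)*Real.log (1+e)
      ≤ e^2 + (e^2)^2/6 + (e^2)^3/15 + (e^2)^4/(28*(1-e^2)) := by
  set u := e^2 with hu
  have hu0 : 0 ≤ u := by positivity
  have hu1 : u < 1 := by nlinarith
  have hx1 : (0:ℝ) < 1 - u := by linarith
  have hs := hasSum_f h0 h1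
  set F := (1-e)*Real.log (1-e) + (1+e)*Real.log (1+e) with hF
  have htailsum : HasSum (fun n : ℕ => u^(n+3+1)/((((n:ℝ)+3)+1) * (2*((n:ℝ)+3)+1)))
      (F - (u + u^2/6 + u^3/15)) := by
    have h2 := (hasSum_nat_add_iff' (f := fun n : ℕ => u ^ (n + 1) / ((((n:ℝ))+1) * (2*(n:ℝ)+1)))
      (g := F) 3).2 hs
    simp only [Finset.sum_range_succ, Finset.sum_range_zero] at h2
    convert h2 using 2 with n
    · rfl
    · push_cast; ring_nf
    · norm_num
  have hgeo : HasSum (fun i : ℕ => u^4/28 * u^i) (u^4/28 * (1-u)⁻¹) :=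
    (hasSum_geometric_of_lt_one hu0 hu1).mul_left _
  have htail : F - (u + u^2/6 + u^3/15) ≤ u^4/28 * (1-u)⁻¹ := by
    refine hasSum_le (fun i => ?_) htailsum hgeo
    have hi : (0:ℝ) ≤ (i:ℝ) := Nat.cast_nonneg i
    have h3 : (28:ℝ) ≤ (((i:ℝ)+3)+1) * (2*((i:ℝ)+3)+1) := by nlinarith
    have hp : u^(i+3+1) = u^4 * u^i := by ring
    rw [hp, div_le_iff₀ (by positivity), div_mul_eq_mul_div, div_mul_eq_mul_div,
      le_div_iff₀ (by norm_num)]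
    have hxn : (0:ℝ) ≤ u^4 * u^i := by positivity
    nlinarith [mul_le_mul_of_nonneg_left h3 hxn]
  have heq : u^4/28 * (1-u)⁻¹ = u^4/(28*(1-u)) := by field_simp
  rw [heq] at htail
  linarith


-- log(1+x) ≤ x/(1+x) + x²/(2(1+x)²) + x³/(3(1+x)²)
lemma log_one_add_ub {x : ℝ} (h0 : 0 ≤ x) :
    Real.log (1+x) ≤ x/(1+x) + x^2/(2*(1+x)^2) + x^3/(3*(1+x)^2) := by
  have h1x : (0:ℝ) < 1 + x := by linarith
  set y := x/(1+x) with hy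
  have hy0 : 0 ≤ y := by positivity
  have hy1 : y < 1 := by
    rw [hy, div_lt_one h1x]; linarith
  have h1y : 1 - y = 1/(1+x) := by rw [hy]; field_simp; ring
  have hlog : Real.log (1+x) = -Real.log (1 - y) := by
    rw [h1y, Real.log_div one_ne_zero (by positivity)]
    simp
  have hub := neg_log_ub hy0 hy1
  rw [hlog]
  calc -Real.log (1-y) ≤ y + y^2/2 + y^3/(3*(1-y)) := hub
    _ = x/(1+x) + x^2/(2*(1+x)^2) + x^3/(3*(1+x)^2) := by
        rw [h1y, hy]
        field_simp

lemma log_one_add_ub' {x : ℝ} (h0 : 0 ≤ x) :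
    Real.log (1+x) ≤ x - x^2/2 + x^3/2 := by
  have hx1 : (0:ℝ) < 1 + x := by linarith
  have hD : (0:ℝ) < (1+x)^2 := by positivity
  have h := log_one_add_ub h0
  have heq : x/(1+x) + x^2/(2*(1+x)^2) + x^3/(3*(1+x)^2)
      = (x*(1+x) + x^2/2 + x^3/3)/(1+x)^2 := by
    field_simp
  have key : x*(1+x) + x^2/2 + x^3/3 ≤ (x - x^2/2 + x^3/2)*(1+x)^2 := by
    nlinarith [pow_nonneg h0 3, pow_nonneg h0 4, pow_nonneg h0 5]
  have hfrac : (x*(1+x) + x^2/2 + x^3/3)/(1+x)^2 ≤ x - x^2/2 + x^3/2 := by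
    rw [div_le_iff₀ hD]; exact key
  rw [heq] at h
  linarith

lemma region2_poly {d L : ℝ} (hd0 : 0 < d) (hd8 : d < 1/8) (hLlo : 0.6931471803 < L) :
    d*(8*d - 1 - 3*L) + (2-d)*(L - d/2 - d^2/8)
      + 2*((2*d - d^2) - (2*d - d^2)^2/2 + (2*d - d^2)^3/2) - 2*L < 0 := by
  nlinarith [hd0, hd8, hLlo, mul_pos hd0 hd0, mul_pos (mul_pos hd0 hd0) hd0,
    mul_le_mul_of_nonneg_right hd8.le (sq_nonneg d),
    mul_le_mul_of_nonneg_right hd8.le hd0.le, sq_nonneg d,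
    pow_pos hd0 4, pow_pos hd0 5, pow_pos hd0 6]

-- Main: E(e) < 0 for 0 < e < 1
lemma E_neg {e : ℝ} (h0 : 0 < e) (h1 : e < 1) :
    (1-e)*Real.log (1-e) + (1+e)*Real.log (1+e) + 2*Real.log (1 - e^2/2) < 0 := by
  have hL2l := Real.log_two_gt_d9
  have hL2u := Real.log_two_lt_d9
  rcases le_or_gt e (7/8) with hsplit | hsplit
  · -- region 1 : u ≤ 49/64
    set u := e^2 with hu
    have hu0 : 0 < u := by positivity
    have hu1 : u ≤ 49/64 := by nlinarith
    have hfu := f_upper h0.le h1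
    have hlb := neg_log_lb (x := u/2) (by positivity) (by nlinarith)
    -- 2*log(1-u/2) ≤ -2*(u/2 + u²/8 + u³/24)
    have hlog2 : 2*Real.log (1 - e^2/2) ≤ -(u + u^2/4 + u^3/12) := by
      have : Real.log (1 - u/2) ≤ -(u/2 + (u/2)^2/2 + (u/2)^3/3) := by linarith
      have h2 : 2*Real.log (1 - u/2) ≤ -2*(u/2 + (u/2)^2/2 + (u/2)^3/3) := by linarith
      calc 2*Real.log (1 - e^2/2) = 2*Real.log (1 - u/2) := by rw [hu]
        _ ≤ -2*(u/2 + (u/2)^2/2 + (u/2)^3/3) := h2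
        _ = -(u + u^2/4 + u^3/12) := by ring
    have h1u : (0:ℝ) < 1 - u := by linarith
    have hpoly : u^4/(28*(1-u)) < u^2/12 + u^3/60 := by
      rw [div_lt_iff₀ (by positivity)]
      nlinarith [mul_le_mul_of_nonneg_right hu1 (sq_nonneg u), mul_le_mul hu1 hu1 hu0.le (by norm_num : (0:ℝ) ≤ 49/64), sq_nonneg u, hu0.le, mul_pos hu0 hu0]
    rw [← hu] at hfu
    linarith [hfu, hlog2, hpoly]
  · -- region 2 : e ≥ 7/8, d = 1-e ≤ 1/8
    set d := 1 - e with hd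
    have hd0 : 0 < d := by simp [hd]; linarith
    have hd8 : d < 1/8 := by simp [hd]; linarith
    set x := 2*d - d^2 with hx
    have hx0 : 0 < x := by nlinarith
    have hx1 : (0:ℝ) < 1 + x := by linarith
    set L := Real.log 2 with hL
    -- log d ≤ 8d - 1 - 3L
    have hb1 : Real.log d ≤ 8*d - 1 - 3*L := by
      have h8 : Real.log (8*d) = Real.log 8 + Real.log d :=
        Real.log_mul (by norm_num) (ne_of_gt hd0)
      have h83 : Real.log 8 = 3*L := by
        rw [show (8:ℝ) = 2^3 by norm_num, Real.log_pow]
        push_cast; ring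
      have hle := Real.log_le_sub_one_of_pos (show (0:ℝ) < 8*d by linarith)
      rw [h8, h83] at hle
      linarith
    -- log (1+e) = L + log(1 - d/2) ≤ L - d/2 - d²/8
    have hb2 : Real.log (1+e) ≤ L - d/2 - d^2/8 := by
      have h1e : 1 + e = 2*(1 - d/2) := by simp [hd]; ring
      have hpos : (0:ℝ) < 1 - d/2 := by linarith
      rw [h1e, Real.log_mul (by norm_num) (ne_of_gt hpos)]
      have := neg_log_lb (x := d/2) (by linarith) (by linarith)
      have h3 : Real.log (1 - d/2) ≤ -(d/2) - (d/2)^2/2 := by nlinarith [pow_pos hd0 3]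
      rw [← hL]
      nlinarith
    -- 2*log(1 - e^2/2) = 2*log(1+x) - 2L
    have hb3 : Real.log (1 - e^2/2) = Real.log (1+x) - L := by
      have h1e : 1 - e^2/2 = (1+x)/2 := by simp [hd, hx]; ring
      rw [h1e, Real.log_div (ne_of_gt hx1) (by norm_num), ← hL]
    -- polynomial bound on log(1+x)
    have hb4 : Real.log (1+x) ≤ x - x^2/2 + x^3/2 := log_one_add_ub' hx0.le
    -- log(1-e) = log d
    have hgoal : (1-e)*Real.log (1-e) = d * Real.log d := by rw [← hd]
    have hLlo : (0.6931471803:ℝ) < L := hL ▸ hL2l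
    have hLhi : L < (0.6931471808:ℝ) := hL ▸ hL2u
    have harg : (1:ℝ) + e = 2 - d := by rw [hd]; ring
    have hfin : d*(8*d - 1 - 3*L) + (2-d)*(L - d/2 - d^2/8) + 2*(x - x^2/2 + x^3/2) - 2*L < 0 := by
      rw [hx]
      exact region2_poly hd0 hd8 hLlo
    have hdlog : d * Real.log d ≤ d * (8*d - 1 - 3*L) :=
      mul_le_mul_of_nonneg_left hb1 hd0.le
    have hb2' : (1+e) * Real.log (1+e) ≤ (1+e) * (L - d/2 - d^2/8) :=
      mul_le_mul_of_nonneg_left hb2 (by linarith)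
    have hswap : (1+e) * (L - d/2 - d^2/8) = (2-d) * (L - d/2 - d^2/8) := by rw [harg]
    have hlog3 : 2*Real.log (1 - e^2/2) = 2*Real.log (1+x) - 2*L := by rw [hb3]; ring
    rw [hx] at hlog3 hb4
    rw [hx] at hfin
    clear_value d x L
    linarith [hdlog, hb2', hswap, hlog3, hb4, hfin]


lemma part2 {p : ℝ} (hp0 : 0 < p) (hp1 : p < 1) :
    (1 + 2*p - p^2) * p ^ (p/2) * (2-p) ^ ((2-p)/2) < 2 := by
  obtain ⟨e, rfl⟩ : ∃ e, p = 1 - e := ⟨1 - p, by ring⟩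
  have he0 : 0 < e := by linarith
  have he1 : e < 1 := by linarith
  have hp0' : (0:ℝ) < 1 - e := by linarith
  have hA : (0:ℝ) < 1 + 2*(1-e) - (1-e)^2 := by nlinarith
  have hB : (0:ℝ) < (1-e) ^ ((1-e)/2) := Real.rpow_pos_of_pos hp0' _
  have h2p : (0:ℝ) < 2 - (1-e) := by linarith
  have hC : (0:ℝ) < (2-(1-e)) ^ ((2-(1-e))/2) := Real.rpow_pos_of_pos h2p _
  have hP : (0:ℝ) < (1 + 2*(1-e) - (1-e)^2) * (1-e) ^ ((1-e)/2) * (2-(1-e)) ^ ((2-(1-e))/2) :=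
    by positivity
  rw [← Real.log_lt_log_iff hP (by norm_num)]
  rw [Real.log_mul (by positivity) (ne_of_gt hC), Real.log_mul (ne_of_gt hA) (ne_of_gt hB),
    Real.log_rpow hp0', Real.log_rpow h2p]
  have hkey := E_neg he0 he1
  have hlogA : Real.log (1 + 2*(1-e) - (1-e)^2) = Real.log 2 + Real.log (1 - e^2/2) := by
    rw [show 1 + 2*(1-e) - (1-e)^2 = 2*(1 - e^2/2) from by ring,
      Real.log_mul (by norm_num) (by nlinarith)]
  rw [hlogA, show (2:ℝ) - (1-e) = 1+e from by ring]
  linarith [hkey]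

-- 1 + c^2 < 2 * c^p for c = p/(2-p)
lemma c_ineq {p : ℝ} (hp0 : 0 < p) (hp1 : p < 1) :
    1 + (p/(2-p))^2 < 2 * (p/(2-p)) ^ p := by
  obtain ⟨e, rfl⟩ : ∃ e, p = 1 - e := ⟨1 - p, by ring⟩
  have he0 : 0 < e := by linarith
  have he1 : e < 1 := by linarith
  have hp0' : (0:ℝ) < 1 - e := by linarith
  have h2p : (0:ℝ) < 2 - (1-e) := by linarith
  set c := (1-e)/(2-(1-e)) with hc
  have hc0 : 0 < c := by positivity
  have hLHS : (0:ℝ) < 1 + c^2 := by positivity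
  have hRHS : (0:ℝ) < 2 * c ^ (1-e) := by positivity
  rw [← Real.log_lt_log_iff hLHS hRHS]
  rw [Real.log_mul (by norm_num) (ne_of_gt (Real.rpow_pos_of_pos hc0 (1-e))),
    Real.log_rpow hc0]
  have hce : c = (1-e)/(1+e) := by rw [hc]; ring_nf
  have hlogc : Real.log c = Real.log (1-e) - Real.log (1+e) := by
    rw [hce, Real.log_div (by linarith) (by linarith)]
  have h1c2 : 1 + c^2 = 2*(1+e^2)/(1+e)^2 := by
    rw [hce]
    field_simp
    ring
  have hlog1c2 : Real.log (1 + c^2) = Real.log 2 + Real.log (1+e^2) - 2*Real.log (1+e) := by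
    rw [h1c2, Real.log_div (by positivity) (by positivity),
      Real.log_mul (by norm_num) (by positivity), Real.log_pow]
    push_cast; ring
  rw [hlog1c2, hlogc]
  have hu : Real.log (1+e^2) ≤ e^2 - (e^2)^2/2 + (e^2)^3/2 := log_one_add_ub' (by positivity)
  have hf := f_lower he0.le he1
  have hpoly : e^2 - (e^2)^2/2 + (e^2)^3/2 < e^2 + (e^2)^2/6 + (e^2)^3/15 := by
    nlinarith [sq_nonneg (e*e), mul_pos he0 he0, pow_pos he0 4, pow_pos he0 6,
      mul_lt_mul_of_pos_left (show e*e < 1 by nlinarith) (pow_pos he0 4)]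
  linarith [hu, hf, hpoly]

end Aux

open Real in



set_option maxHeartbeats 1000000 in
theorem Fp_sign_at_endpoints (p a1 : ℝ) (hp0 : 0 < p) (hp1 : p < 1)
    (ha1 : a1 ∈ Set.Ioo (0 : ℝ) 1) (ha1eq : 1 + a1 ^ 2 = 2 * a1 ^ p) :
    Fp p (Real.sqrt (p / (2 - p))) < 0
    ∧ (1 + 2 * p - p ^ 2) * p ^ (p / 2) * (2 - p) ^ ((2 - p) / 2) < 2
    ∧ 0 < Fp p a1 := by
  obtain ⟨ha10, ha11⟩ := ha1
  have h2p : (0:ℝ) < 2 - p := by linarith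
  have hc0 : (0:ℝ) < p/(2-p) := by positivity
  have hc1 : p/(2-p) < 1 := by rw [div_lt_one h2p]; linarith
  have hB : (0:ℝ) < p ^ (p/2) := Real.rpow_pos_of_pos hp0 _
  have hC : (0:ℝ) < (2-p) ^ (p/2) := Real.rpow_pos_of_pos h2p _
  refine ⟨?_, part2 hp0 hp1, ?_⟩
  · -- Part 1
    set c := p/(2-p) with hc
    set s := Real.sqrt c with hs
    have hs0 : 0 < s := Real.sqrt_pos.2 hc0
    have hs2 : s^2 = c := Real.sq_sqrt hc0.le
    have hsrp : s = c ^ ((1:ℝ)/2) := Real.sqrt_eq_rpow c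
    -- rpow computations
    have hneg2 : s ^ (-2:ℝ) = (s^2)⁻¹ := by
      rw [Real.rpow_neg hs0.le, show ((2:ℝ)) = ((2:ℕ):ℝ) from by norm_num,
        Real.rpow_natCast]
    have hnegp : s ^ (-p) = c ^ (-(p/2)) := by
      rw [hsrp, ← Real.rpow_mul hc0.le]
      norm_num
      ring_nf
    have h2mp : s ^ (2-p) = c * c ^ (-(p/2)) := by
      rw [hsrp, ← Real.rpow_mul hc0.le]
      rw [show (1:ℝ)/2 * (2-p) = 1 + -(p/2) from by ring, Real.rpow_add hc0,
        Real.rpow_one]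
    set A := c ^ (-(p/2)) with hA
    have hFval : Fp p s = p^2/c + 2*p*(2-p) + (2-p)^2*c - 4*(A + c*A - 1) := by
      rw [Fp, hneg2, hnegp, h2mp, hs2]
      field_simp
    have hAval : A = (2-p)^(p/2) / p^(p/2) := by
      rw [hA, hc, Real.div_rpow hp0.le h2p.le, Real.rpow_neg hp0.le, Real.rpow_neg h2p.le]
      field_simp
    -- from part2 : (1+2p-p²) * p^(p/2) * (2-p)^((2-p)/2) < 2
    have hp2 := part2 hp0 hp1
    have hsplit : (2-p) ^ ((2-p)/2) = (2-p) / (2-p)^(p/2) := by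
      rw [show (2-p)/2 = 1 + -(p/2) from by ring, Real.rpow_add h2p, Real.rpow_one,
        Real.rpow_neg h2p.le]
      field_simp
    rw [hsplit] at hp2
    -- hence (1+2p-p²) * p^(p/2) * (2-p) < 2 * (2-p)^(p/2)
    have hp2' : (1 + 2*p - p^2) * p^(p/2) * (2-p) < 2 * (2-p)^(p/2) := by
      have hm := mul_lt_mul_of_pos_right hp2 hC
      have heqq : (1 + 2*p - p^2) * p^(p/2) * ((2-p)/(2-p)^(p/2)) * (2-p)^(p/2)
          = (1 + 2*p - p^2) * p^(p/2) * (2-p) := by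
        field_simp
      linarith [hm, heqq]
    -- key : p(2-p)+1 < A*(1+c)
    have hkey : p*(2-p) + 1 < A * (1+c) := by
      have h1c : 1 + c = 2/(2-p) := by rw [hc]; field_simp; ring
      rw [hAval, h1c]
      rw [show (2-p)^(p/2)/p^(p/2) * (2/(2-p)) = (2*(2-p)^(p/2)) / (p^(p/2)*(2-p)) from by
        field_simp]
      rw [lt_div_iff₀ (by positivity)]
      nlinarith [hp2']
    have hc2 : p^2/c = p*(2-p) := by rw [hc]; field_simp
    have hc3 : (2-p)^2*c = p*(2-p) := by rw [hc]; field_simp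
    rw [hFval, hc2, hc3]
    nlinarith [hkey]
  · -- Part 3
    have hcineq := c_ineq hp0 hp1
    obtain ⟨c, hcdef⟩ : ∃ c, c = p/(2-p) := ⟨_, rfl⟩
    rw [← hcdef] at hcineq
    have hcc0 : (0:ℝ) < c := hcdef ▸ hc0
    have hcc1 : c < 1 := hcdef ▸ hc1
    -- a1 < c
    have ha1c : a1 < c := by
      by_contra hcon
      push_neg at hcon  -- c ≤ a1
      rcases eq_or_lt_of_le hcon with heq | hlt
      · rw [heq] at hcineq
        linarith [hcineq, ha1eq.le, ha1eq.ge]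
      · -- c < a1 < 1
        obtain ⟨t, htdef⟩ : ∃ t, t = (1 - a1)/(1 - c) := ⟨_, rfl⟩
        have ht0 : 0 < t := by
          rw [htdef]
          apply div_pos <;> linarith
        have ht1 : t < 1 := by
          rw [htdef, div_lt_one (by linarith)]
          linarith
        have h1cne : (1:ℝ) - c ≠ 0 := by intro h; linarith [h.ge, h.le]
        have htc : t * (1 - c) = 1 - a1 := by
          rw [htdef]
          field_simp
        have hcomb : t*c + (1-t)*1 = a1 := by linarith [htc]
        have hconc := (Real.strictConcaveOn_rpow hp0 hp1).2
          (Set.mem_Ici.2 hcc0.le) (Set.mem_Ici.2 (by norm_num : (0:ℝ) ≤ 1))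
          (ne_of_lt hcc1) ht0 (by linarith : 0 < 1 - t) (by ring)
        simp only [smul_eq_mul] at hconc
        rw [hcomb, Real.one_rpow] at hconc
        -- hconc : t * c^p + (1-t) * 1 < a1^p
        have hsq : a1^2 ≤ t*c^2 + (1-t) := by nlinarith [mul_pos ht0 (show 0 < 1 - t by linarith), sq_nonneg (c-1), hcomb]
        have hchain : 1 + a1^2 < 2 * a1^p := by
          have h1 : t*(1 + c^2) < t*(2 * c^p) := by
            apply mul_lt_mul_of_pos_left hcineq ht0
          nlinarith [hconc, hsq, h1]
        linarith [ha1eq.le, hchain]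
    -- now compute Fp p a1
    have hap : (0:ℝ) < a1 ^ p := Real.rpow_pos_of_pos ha10 _
    have hneg2 : a1 ^ (-2:ℝ) = (a1^2)⁻¹ := by
      rw [Real.rpow_neg ha10.le, show ((2:ℝ)) = ((2:ℕ):ℝ) from by norm_num,
        Real.rpow_natCast]
    have hnegp : a1 ^ (-p) = (a1^p)⁻¹ := Real.rpow_neg ha10.le p
    have h2mp : a1 ^ (2-p) = a1^2 * (a1^p)⁻¹ := by
      rw [Real.rpow_sub ha10, show ((2:ℝ)) = ((2:ℕ):ℝ) from by norm_num,
        Real.rpow_natCast]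
      field_simp
    have hsum : a1 ^ (-p) + a1 ^ (2-p) - 1 = 1 := by
      rw [hnegp, h2mp]
      have : (a1^p)⁻¹ + a1^2 * (a1^p)⁻¹ = (1 + a1^2) * (a1^p)⁻¹ := by ring
      rw [this, ha1eq]
      field_simp
      norm_num
    have hcineq2 : (2-p)*a1 < p := by
      have hac : a1 < p/(2-p) := by rw [← hcdef]; exact ha1c
      have := (lt_div_iff₀ h2p).1 hac
      linarith [this]
    have hposfac : 0 < (p - 2*a1 + (2-p)*a1^2) * (p + 2*a1 + (2-p)*a1^2) := by
      apply mul_pos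
      · nlinarith [ha11, hcineq2]
      · positivity
    have hFval : Fp p a1 = ((p - 2*a1 + (2-p)*a1^2) * (p + 2*a1 + (2-p)*a1^2)) / a1^2 := by
      rw [Fp, hsum, hneg2]
      field_simp
      ring
    rw [hFval]
    exact div_pos hposfac (by positivity)
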